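/- Let c be a real number with |c| > 27/4. Then the series S(c) = Σ_{n≥0} (1/(2n+1))·C(3n, n)·c^{-n} converges, and its sum β = S(c) satisfies β³ - cβ + c = 0. -/

import Mathlib

open Finset Nat

/-- Raney numbers `R_r(n) = r/(3n+r) * C(3n+r, n)` as reals. -/
noncomputable def Rr (r n : ℕ) : ℝ := r * ((3*n+r).choose n) / (3*n+r)

lemma Rr_zero (n : ℕ) : Rr 0 n = 0 := by simp [Rr]

lemma Rr_n0 (r : ℕ) : Rr (r+1) 0 = 1 := by
  unfold Rr
  push_cast
  rw [Nat.choose_zero_right]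
  push_cast
  field_simp
  ring

lemma cast_choose3 (a b : ℕ) : ((a+b).choose a : ℝ) = (a+b)! / (a ! * b !) :=
  Nat.cast_add_choose ℝ

/-- The Pascal-type recurrence for Raney numbers. -/
lemma Rr_rec (r n : ℕ) : Rr (r+1) (n+1) = Rr r (n+1) + Rr (r+3) n := by
  have fne : ∀ m : ℕ, (m ! : ℝ) ≠ 0 := fun m => Nat.cast_ne_zero.2 (factorial_ne_zero _)
  have e1 : 3*(n+1)+(r+1) = (n+1) + (2*n+r+3) := by omega
  have e2 : 3*(n+1)+r = (n+1) + (2*n+r+2) := by omega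
  have e3 : 3*n+(r+3) = n + (2*n+r+3) := by omega
  unfold Rr
  rw [e1, e2, e3, cast_choose3, cast_choose3, cast_choose3]
  have f1 : (((n+1) + (2*n+r+3))! : ℝ) = (3*n+r+4) * ((n+1)+(2*n+r+2))! := by
    have : (n+1) + (2*n+r+3) = ((n+1)+(2*n+r+2)) + 1 := by omega
    rw [this, Nat.factorial_succ]; push_cast; ring_nf
  have f2 : ((n + (2*n+r+3))! : ℝ) = ((n+1)+(2*n+r+2))! := by
    congr 2; omega
  have f3 : (((n+1))! : ℝ) = (n+1) * (n !) := by
    rw [Nat.factorial_succ]; push_cast; ring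
  have f4 : ((2*n+r+3)! : ℝ) = (2*n+r+3) * ((2*n+r+2)!) := by
    have : 2*n+r+3 = (2*n+r+2) + 1 := by omega
    rw [this, Nat.factorial_succ]; push_cast; ring_nf
  rw [f1, f2, f3, f4]
  push_cast
  have hA : ((((n+1)+(2*n+r+2))! : ℝ)) ≠ 0 := fne _
  field_simp
  ring

/-- Raney convolution identity: `∑ R_1(k) R_{r+1}(n-k) = R_{r+2}(n)`. -/
lemma Rr_conv (n : ℕ) : ∀ r : ℕ, ∑ k ∈ range (n+1), Rr 1 k * Rr (r+1) (n-k) = Rr (r+2) n := by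
  induction n with
  | zero =>
    intro r
    norm_num
    rw [show (1:ℕ) = 0+1 from rfl, Rr_n0, Rr_n0, one_mul, ← Rr_n0 (r+1)]
  | succ n IH =>
    intro r
    induction r with
    | zero =>
      rw [Finset.sum_range_succ]
      have h1 : ∑ k ∈ range (n+1), Rr 1 k * Rr 1 (n+1-k)
          = ∑ k ∈ range (n+1), Rr 1 k * Rr 3 (n-k) := by
        refine Finset.sum_congr rfl fun k hk => ?_
        have hk' : k ≤ n := by have := Finset.mem_range.mp hk; omega
        have e : n + 1 - k = (n-k)+1 := by omega
        have h2 : Rr 1 ((n-k)+1) = Rr 3 (n-k) := by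
          have h3 := Rr_rec 0 (n-k)
          simpa [Rr_zero] using h3
        rw [e, h2]
      rw [h1, IH 2, Nat.sub_self, Rr_n0, mul_one]
      have h3 := Rr_rec 1 n
      norm_num at h3 ⊢
      rw [h3]; ring
    | succ r IHr =>
      rw [Finset.sum_range_succ] at IHr
      rw [Finset.sum_range_succ]
      simp only [Nat.sub_self, Rr_n0, mul_one] at IHr ⊢
      have h1 : ∑ k ∈ range (n+1), Rr 1 k * Rr (r+1+1) (n+1-k)
          = ∑ k ∈ range (n+1), (Rr 1 k * Rr (r+1) (n+1-k) + Rr 1 k * Rr (r+4) (n-k)) := by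
        refine Finset.sum_congr rfl fun k hk => ?_
        have hk' : k ≤ n := by have := Finset.mem_range.mp hk; omega
        have e : n + 1 - k = (n-k)+1 := by omega
        have h2 := Rr_rec (r+1) (n-k)
        rw [show r+1+3 = r+4 from rfl] at h2
        rw [e, h2]; ring
      rw [h1, Finset.sum_add_distrib]
      have h4 : ∑ k ∈ range (n+1), Rr 1 k * Rr (r+4) (n-k) = Rr (r+5) n := by
        have := IH (r+3)
        rw [show r+3+1 = r+4 from rfl, show r+3+2 = r+5 from rfl] at this
        exact this
      have h5 := Rr_rec (r+2) n
      rw [show r+2+1 = r+1+2 from rfl, show r+2+3 = r+5 from rfl] at h5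
      rw [h4, h5]
      linarith [IHr]

lemma Rr_nonneg (r n : ℕ) : 0 ≤ Rr r n := by
  unfold Rr; positivity

lemma Rr_one_eq (n : ℕ) : Rr 1 n = (Nat.choose (3*n) n : ℝ) / (2*n+1) := by
  have fne : ∀ m : ℕ, (m ! : ℝ) ≠ 0 := fun m => Nat.cast_ne_zero.2 (factorial_ne_zero _)
  unfold Rr
  have e1 : 3*n+1 = n + (2*n+1) := by omega
  have e2 : 3*n = n + (2*n) := by omega
  rw [e1, e2, cast_choose3, cast_choose3]
  have f4 : ((2*n+1)! : ℝ) = (2*n+1) * ((2*n)!) := by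
    rw [Nat.factorial_succ]; push_cast; ring
  have f1 : ((n + (2*n+1))! : ℝ) = (3*n+1) * ((n + 2*n)!) := by
    have : n + (2*n+1) = (n + 2*n) + 1 := by omega
    rw [this, Nat.factorial_succ]; push_cast; ring_nf
  rw [f1, f4]
  push_cast
  field_simp

lemma Rr_one_succ (n : ℕ) : Rr 1 (n+1) = Rr 3 n := by
  have h := Rr_rec 0 n
  simpa [Rr_zero] using h

lemma choose_central_le (n : ℕ) : (Nat.choose (3*n) n : ℝ) ≤ (27/4)^n := by
  have hnat : (Nat.choose (3*n) n) * 2^(2*n) ≤ 3^(3*n) := by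
    have hexp : (1+2 : ℕ)^(3*n) = ∑ k ∈ range (3*n+1), 1^k * 2^(3*n-k) * ((3*n).choose k) :=
      add_pow 1 2 (3*n)
    have hmem : n ∈ range (3*n+1) := by
      rw [Finset.mem_range]; omega
    have hle := Finset.single_le_sum
      (f := fun k => 1^k * 2^(3*n-k) * ((3*n).choose k))
      (fun k _ => Nat.zero_le _) hmem
    rw [← hexp] at hle
    simp only [one_pow, one_mul, show 3*n-n = 2*n by omega] at hle
    calc (3*n).choose n * 2^(2*n) = 2^(2*n) * (3*n).choose n := by ring
      _ ≤ (1+2)^(3*n) := hle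
      _ = 3^(3*n) := by norm_num
  have hcast : ((Nat.choose (3*n) n : ℝ)) * 2^(2*n) ≤ 3^(3*n) := by
    exact_mod_cast hnat
  have h2 : ((27:ℝ)/4)^n = 3^(3*n) / 2^(2*n) := by
    rw [div_pow, show (27:ℝ) = 3^3 by norm_num, show (4:ℝ) = 2^2 by norm_num,
      ← pow_mul, ← pow_mul]
  rw [h2, le_div_iff₀ (by positivity)]
  exact hcast

lemma Rr_one_le (n : ℕ) : Rr 1 n ≤ (27/4)^n := by
  rw [Rr_one_eq]
  calc (Nat.choose (3*n) n : ℝ) / (2*n+1) ≤ (Nat.choose (3*n) n : ℝ) / 1 := by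
        apply div_le_div_of_nonneg_left (by positivity) (by norm_num) (by linarith [Nat.cast_nonneg (α := ℝ) n])
    _ = (Nat.choose (3*n) n : ℝ) := div_one _
    _ ≤ (27/4)^n := choose_central_le n

lemma Rr_two_le (n : ℕ) : Rr 2 n ≤ (n+1) * (27/4)^n := by
  have h := Rr_conv n 0
  norm_num at h
  rw [← h]
  calc ∑ k ∈ range (n+1), Rr 1 k * Rr 1 (n-k)
      ≤ ∑ k ∈ range (n+1), (27/4:ℝ)^n := by
        apply Finset.sum_le_sum
        intro k hk
        have hk' : k ≤ n := by have := Finset.mem_range.mp hk; omega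
        calc Rr 1 k * Rr 1 (n-k) ≤ (27/4)^k * (27/4)^(n-k) := by
              apply mul_le_mul (Rr_one_le k) (Rr_one_le (n-k)) (Rr_nonneg 1 (n-k)) (by positivity)
          _ = (27/4)^n := by rw [← pow_add]; congr 1; omega
    _ = (n+1) * (27/4)^n := by
        rw [Finset.sum_const, Finset.card_range, nsmul_eq_mul]; push_cast; ring

theorem hypergeometric_series_root (c : ℝ) (hc : |c| > 27 / 4) :
    Summable (fun n : ℕ =>
      (1 / (2 * (n : ℝ) + 1)) * (Nat.choose (3 * n) n : ℝ) * c⁻¹ ^ n) ∧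
    (∑' n : ℕ, (1 / (2 * (n : ℝ) + 1)) * (Nat.choose (3 * n) n : ℝ) * c⁻¹ ^ n) ^ 3
      - c * (∑' n : ℕ, (1 / (2 * (n : ℝ) + 1)) * (Nat.choose (3 * n) n : ℝ) * c⁻¹ ^ n)
      + c = 0 := by
  have hc0 : c ≠ 0 := by
    intro h
    rw [h, abs_zero] at hc
    norm_num at hc
  set x : ℝ := c⁻¹ with hxdef
  have hxlt : |x| < 4/27 := by
    rw [hxdef, abs_inv]
    rw [inv_lt_comm₀ (by positivity) (by norm_num)]
    · linarith
  set q : ℝ := 27/4 * |x| with hqdef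
  have hq0 : 0 ≤ q := by positivity
  have hq1 : q < 1 := by rw [hqdef]; nlinarith [abs_nonneg x]
  -- the summand equals g
  have hfg : (fun n : ℕ => (1 / (2 * (n : ℝ) + 1)) * (Nat.choose (3 * n) n : ℝ) * c⁻¹ ^ n)
      = fun n => Rr 1 n * x ^ n := by
    funext n
    rw [Rr_one_eq]
    ring
  set g : ℕ → ℝ := fun n => Rr 1 n * x ^ n with hgdef
  have hgb : ∀ n, ‖g n‖ ≤ q ^ n := by
    intro n
    rw [hgdef]
    simp only [norm_mul, Real.norm_eq_abs, abs_pow]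
    rw [abs_of_nonneg (Rr_nonneg 1 n), hqdef, mul_pow]
    exact mul_le_mul_of_nonneg_right (Rr_one_le n) (by positivity)
  have hgnorm : Summable (fun n => ‖g n‖) :=
    Summable.of_nonneg_of_le (fun n => norm_nonneg _) hgb (summable_geometric_of_lt_one hq0 hq1)
  have hg : Summable g := hgnorm.of_norm
  -- square
  have hsq : (∑' n, g n) * (∑' n, g n) = ∑' n, Rr 2 n * x ^ n := by
    rw [tsum_mul_tsum_eq_tsum_sum_range_of_summable_norm hgnorm hgnorm]
    congr 1
    funext n
    have conv := Rr_conv n 0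
    norm_num at conv
    calc ∑ k ∈ range (n+1), g k * g (n-k)
        = ∑ k ∈ range (n+1), Rr 1 k * Rr 1 (n-k) * x^n := by
          refine Finset.sum_congr rfl fun k hk => ?_
          have hk' : k ≤ n := by have := Finset.mem_range.mp hk; omega
          rw [hgdef]
          have : x^k * x^(n-k) = x^n := by rw [← pow_add]; congr 1; omega
          calc Rr 1 k * x^k * (Rr 1 (n-k) * x^(n-k))
              = Rr 1 k * Rr 1 (n-k) * (x^k * x^(n-k)) := by ring
            _ = Rr 1 k * Rr 1 (n-k) * x^n := by rw [this]
      _ = (∑ k ∈ range (n+1), Rr 1 k * Rr 1 (n-k)) * x^n := by rw [Finset.sum_mul]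
      _ = Rr 2 n * x^n := by rw [conv]
  -- norm-summability of square coefficients
  have hsqnorm : Summable (fun n => ‖Rr 2 n * x ^ n‖) := by
    have hbig : Summable (fun n : ℕ => ((n:ℝ)+1) * q^n) := by
      have h1 : Summable (fun n : ℕ => (n:ℝ) * q^n) := by
        have := summable_pow_mul_geometric_of_norm_lt_one 1 (by rwa [Real.norm_eq_abs, abs_of_nonneg hq0] : ‖q‖ < 1)
        simpa using this
      have h2 : Summable (fun n : ℕ => q^n) := summable_geometric_of_lt_one hq0 hq1
      simpa [add_mul] using h1.add h2
    apply Summable.of_nonneg_of_le (fun n => norm_nonneg _) _ hbig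
    intro n
    simp only [norm_mul, Real.norm_eq_abs, abs_pow]
    rw [abs_of_nonneg (Rr_nonneg 2 n)]
    calc Rr 2 n * |x|^n ≤ ((n:ℝ)+1) * (27/4)^n * |x|^n :=
          mul_le_mul_of_nonneg_right (Rr_two_le n) (by positivity)
      _ = ((n:ℝ)+1) * q^n := by rw [hqdef, mul_pow]; ring
  -- cube
  have hcube : (∑' n, g n)^3 = ∑' n, Rr 1 (n+1) * x^n := by
    have : (∑' n, g n)^3 = ((∑' n, g n) * (∑' n, g n)) * (∑' n, g n) := by ring
    rw [this, hsq, tsum_mul_tsum_eq_tsum_sum_range_of_summable_norm hsqnorm hgnorm]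
    congr 1
    funext n
    have conv := Rr_conv n 1
    norm_num at conv
    calc ∑ k ∈ range (n+1), (Rr 2 k * x^k) * g (n-k)
        = ∑ k ∈ range (n+1), Rr 2 k * Rr 1 (n-k) * x^n := by
          refine Finset.sum_congr rfl fun k hk => ?_
          have hk' : k ≤ n := by have := Finset.mem_range.mp hk; omega
          rw [hgdef]
          have hx' : x^k * x^(n-k) = x^n := by rw [← pow_add]; congr 1; omega
          calc Rr 2 k * x^k * (Rr 1 (n-k) * x^(n-k))
              = Rr 2 k * Rr 1 (n-k) * (x^k * x^(n-k)) := by ring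
            _ = Rr 2 k * Rr 1 (n-k) * x^n := by rw [hx']
      _ = ∑ k ∈ range (n+1), Rr 1 k * Rr 2 (n-k) * x^n := by
          rw [← Finset.sum_range_reflect]
          refine Finset.sum_congr rfl fun k hk => ?_
          have hk' : k ≤ n := by have := Finset.mem_range.mp hk; omega
          rw [show n+1-1-k = n-k from by omega, show n-(n-k) = k from by omega]
          ring
      _ = (∑ k ∈ range (n+1), Rr 1 k * Rr 2 (n-k)) * x^n := by rw [Finset.sum_mul]
      _ = Rr 3 n * x^n := by rw [conv]
      _ = Rr 1 (n+1) * x^n := by rw [Rr_one_succ]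
  -- functional equation
  have hshift : x * (∑' n, g n)^3 = (∑' n, g n) - 1 := by
    rw [hcube, ← tsum_mul_left]
    have hzeroadd := Summable.tsum_eq_zero_add hg
    have hg0 : g 0 = 1 := by
      rw [hgdef]
      simp only [pow_zero, mul_one]
      rw [show (1:ℕ) = 0+1 from rfl, Rr_n0]
    have hterm : (fun n : ℕ => x * (Rr 1 (n+1) * x^n)) = fun n => g (n+1) := by
      funext n
      show x * (Rr 1 (n+1) * x^n) = Rr 1 (n+1) * x^(n+1)
      rw [pow_succ]; ring
    rw [hterm]
    rw [hzeroadd, hg0]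
    ring
  refine ⟨by rw [hfg]; exact hg, ?_⟩
  rw [hfg]
  set β := ∑' n, g n
  have hx : x = c⁻¹ := hxdef
  have : c * (x * β^3) = c * (β - 1) := by rw [hshift]
  rw [hx, ← mul_assoc, mul_inv_cancel₀ hc0, one_mul] at this
  linarith [this]
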